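/- Let n ≥ 1 be an integer, m > 0, and λ₁, …, λ_n ≥ 0. Let ψ¹, …, ψⁿ : ℝ² → ℝ be twice continuously differentiable functions and F₁, …, F_n : ℝ² → ℝ functions satisfying, for every k = 1, …, n and every x ∈ ℝ², the elliptic equation −Δψᵏ(x) + (m² + λ_k)·ψᵏ(x) + F_k(x) = 0. Let ρ : ℝ² → (0, ∞) be twice continuously differentiable, and suppose the function Ψ²(x) := ρ(x) · Σ_{k=1}^n (ψᵏ(x))² attains a global maximum at a point x̄ ∈ ℝ². Then m² · ρ(x̄) · Σ_{k=1}^n (ψᵏ(x̄))² ≤ −ρ(x̄) · Σ_{k=1}^n ψᵏ(x̄)·F_k(x̄) − ( ρ(x̄)·Δρ(x̄) − 2‖∇ρ(x̄)‖² )/( 2ρ(x̄) ) · Σ_{k=1}^n (ψᵏ(x̄))², where Δ is the Laplacian on ℝ², ∇ the gradient, and ‖·‖ the Euclidean norm. -/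

import Mathlib

/-- The Laplacian on `ℝ²`: the sum of the second partial derivatives. -/
noncomputable def laplacian2 (f : EuclideanSpace ℝ (Fin 2) → ℝ)
    (x : EuclideanSpace ℝ (Fin 2)) : ℝ :=
  ∑ i : Fin 2,
    fderiv ℝ (fun y => fderiv ℝ f y (EuclideanSpace.single i 1)) x (EuclideanSpace.single i 1)

namespace WMPaux

noncomputable abbrev E2 : Type := EuclideanSpace ℝ (Fin 2)

/-- Standard basis vectors of `ℝ²`. -/
noncomputable def bvec (i : Fin 2) : E2 := EuclideanSpace.single i 1

/-- Directional derivative as a function. -/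
noncomputable def Dv (f : E2 → ℝ) (v : E2) (x : E2) : ℝ := fderiv ℝ f x v

lemma laplacian2_eq (f : E2 → ℝ) (x : E2) :
    laplacian2 f x = ∑ i : Fin 2, Dv (Dv f (bvec i)) (bvec i) x := rfl

lemma Dv_differentiable {f : E2 → ℝ} (hf : ContDiff ℝ 2 f) (v : E2) :
    Differentiable ℝ (Dv f v) := by
  have h1 : ContDiff ℝ 1 (fun x => fderiv ℝ f x) := hf.fderiv_right (by norm_num)
  exact (ContinuousLinearMap.apply ℝ ℝ v).differentiable.comp (h1.differentiable one_ne_zero)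

lemma Dv_mul {f g : E2 → ℝ} (hf : Differentiable ℝ f) (hg : Differentiable ℝ g)
    (v x : E2) :
    Dv (fun y => f y * g y) v x = Dv f v x * g x + f x * Dv g v x := by
  unfold Dv
  rw [fderiv_fun_mul (hf x) (hg x)]
  simp only [ContinuousLinearMap.add_apply, ContinuousLinearMap.smul_apply, smul_eq_mul]
  ring

lemma Dv_add {a b : E2 → ℝ} {x : E2} (ha : DifferentiableAt ℝ a x)
    (hb : DifferentiableAt ℝ b x) (v : E2) :
    Dv (fun y => a y + b y) v x = Dv a v x + Dv b v x := by
  unfold Dv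
  rw [fderiv_fun_add ha hb]
  rfl

lemma Dv_DD_mul {f g : E2 → ℝ} (hf : ContDiff ℝ 2 f) (hg : ContDiff ℝ 2 g)
    (v x : E2) :
    Dv (Dv (fun y => f y * g y) v) v x =
      Dv (Dv f v) v x * g x + 2 * (Dv f v x * Dv g v x) + f x * Dv (Dv g v) v x := by
  have hfd := hf.differentiable two_ne_zero
  have hgd := hg.differentiable two_ne_zero
  have h1 : Dv (fun y => f y * g y) v = fun y => Dv f v y * g y + f y * Dv g v y :=
    funext fun y => Dv_mul hfd hgd v y
  have hA : DifferentiableAt ℝ (fun y => Dv f v y * g y) x :=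
    ((Dv_differentiable hf v).mul hgd) x
  have hB : DifferentiableAt ℝ (fun y => f y * Dv g v y) x :=
    (hfd.mul (Dv_differentiable hg v)) x
  rw [h1, Dv_add hA hB v, Dv_mul (Dv_differentiable hf v) hgd v x,
    Dv_mul hfd (Dv_differentiable hg v) v x]
  ring

lemma Dv_sum {ι : Type*} (s : Finset ι) (f : ι → E2 → ℝ)
    (hf : ∀ k, Differentiable ℝ (f k)) (v x : E2) :
    Dv (fun y => ∑ k ∈ s, f k y) v x = ∑ k ∈ s, Dv (f k) v x := by
  unfold Dv
  rw [fderiv_fun_sum fun k _ => (hf k) x]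
  simp

lemma Dv_DD_sum {ι : Type*} (s : Finset ι) (f : ι → E2 → ℝ)
    (hf : ∀ k, ContDiff ℝ 2 (f k)) (v x : E2) :
    Dv (Dv (fun y => ∑ k ∈ s, f k y) v) v x = ∑ k ∈ s, Dv (Dv (f k) v) v x := by
  have h1 : Dv (fun y => ∑ k ∈ s, f k y) v = fun y => ∑ k ∈ s, Dv (f k) v y :=
    funext fun y => Dv_sum s f (fun k => (hf k).differentiable two_ne_zero) v y
  rw [h1]
  exact Dv_sum s _ (fun k => Dv_differentiable (hf k) v) v x

lemma sum_DD_sq (f : E2 → ℝ) (hf : ContDiff ℝ 2 f) (x : E2) :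
    ∑ i : Fin 2, Dv (Dv (fun y => f y * f y) (bvec i)) (bvec i) x
      = 2 * (f x * ∑ i : Fin 2, Dv (Dv f (bvec i)) (bvec i) x)
        + 2 * ∑ i : Fin 2, Dv f (bvec i) x ^ 2 := by
  rw [Finset.sum_congr rfl fun i (_ : i ∈ Finset.univ) => Dv_DD_mul hf hf (bvec i) x]
  rw [Finset.sum_add_distrib, Finset.sum_add_distrib, ← Finset.sum_mul,
    ← Finset.mul_sum, ← Finset.mul_sum]
  simp only [pow_two]
  ring

lemma second_deriv_nonpos {f : ℝ → ℝ} (hf : ContDiff ℝ 2 f)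
    (hmax : ∀ t, f t ≤ f 0) : deriv (deriv f) 0 ≤ 0 := by
  by_contra hc
  push_neg at hc
  have hf1 : Differentiable ℝ f := hf.differentiable two_ne_zero
  have hder1 : ContDiff ℝ 1 (deriv f) := by
    have h := hf.fderiv_right (m := 1) (by norm_num)
    have heq : (deriv f) = fun x => fderiv ℝ f x 1 := by
      funext x; rw [← fderiv_apply_one_eq_deriv]
    rw [heq]
    exact (ContinuousLinearMap.apply ℝ ℝ (1:ℝ)).contDiff.comp h
  have hloc : IsLocalMax f 0 := Filter.Eventually.of_forall hmax
  have hd0 : deriv f 0 = 0 := hloc.deriv_eq_zero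
  have hdd : DifferentiableAt ℝ (deriv f) 0 := (hder1.differentiable one_ne_zero) 0
  have hslope : Filter.Tendsto (slope (deriv f) 0) (nhdsWithin 0 {(0:ℝ)}ᶜ)
      (nhds (deriv (deriv f) 0)) :=
    hasDerivAt_iff_tendsto_slope.mp hdd.hasDerivAt
  have hev : ∀ᶠ t in nhdsWithin 0 {(0:ℝ)}ᶜ,
      deriv (deriv f) 0 / 2 < slope (deriv f) 0 t :=
    hslope.eventually (eventually_gt_nhds (by linarith))
  rw [eventually_nhdsWithin_iff] at hev
  rcases Metric.eventually_nhds_iff.mp hev with ⟨δ, hδ, hball⟩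
  set c := deriv (deriv f) 0 with hcdef
  have hposd : ∀ s : ℝ, 0 < s → s < δ → 0 < deriv f s := by
    intro s hs hsδ
    have hmem : s ∈ ({(0:ℝ)}ᶜ : Set ℝ) := by simp [hs.ne']
    have hdist : dist s 0 < δ := by
      rw [Real.dist_eq, sub_zero, abs_of_pos hs]; exact hsδ
    have h := hball hdist hmem
    rw [slope_def_field, hd0, sub_zero, sub_zero] at h
    have h2 : c / 2 * s < deriv f s := (lt_div_iff₀ hs).mp h
    nlinarith
  have hδ2 : (0:ℝ) < δ / 2 := by linarith
  obtain ⟨ξ, hξ, hξeq⟩ := exists_hasDerivAt_eq_slope f (deriv f) hδ2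
    (hf1.continuous.continuousOn) (fun x _ => (hf1 x).hasDerivAt)
  have hξpos : 0 < deriv f ξ := hposd ξ hξ.1 (by linarith [hξ.2])
  have hle : f (δ / 2) - f 0 ≤ 0 := by linarith [hmax (δ / 2)]
  have hfin : deriv f ξ ≤ 0 := by
    rw [hξeq, sub_zero]
    exact div_nonpos_of_nonpos_of_nonneg hle hδ2.le
  linarith

lemma dd_nonpos_at_max {g : E2 → ℝ} (hg : ContDiff ℝ 2 g) (x₀ v : E2)
    (hmax : ∀ x, g x ≤ g x₀) : Dv (Dv g v) v x₀ ≤ 0 := by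
  set L : ℝ → E2 := fun t => x₀ + t • v with hL
  have hLd : ∀ t, HasDerivAt L v t := by
    intro t
    have h := ((hasDerivAt_id t).smul_const v).const_add x₀
    simpa [hL] using h
  have hgd := hg.differentiable two_ne_zero
  have hLC : ContDiff ℝ 2 L := contDiff_const.add (contDiff_id.smul contDiff_const)
  have hh : ContDiff ℝ 2 (g ∘ L) := hg.comp hLC
  have hL0 : L 0 = x₀ := by simp [hL]
  have hder : deriv (g ∘ L) = fun t => Dv g v (L t) := by
    funext t
    exact (((hgd (L t)).hasFDerivAt).comp_hasDerivAt t (hLd t)).deriv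
  have hmax' : ∀ t, (g ∘ L) t ≤ (g ∘ L) 0 := by
    intro t
    simp only [Function.comp_apply, hL0]
    exact hmax (L t)
  have h2 := second_deriv_nonpos hh hmax'
  have hDvd := Dv_differentiable hg v
  have heq2 : deriv (deriv (g ∘ L)) 0 = Dv (Dv g v) v x₀ := by
    rw [hder]
    have h0 : HasFDerivAt (Dv g v) (fderiv ℝ (Dv g v) x₀) (L 0) :=
      hL0 ▸ (hDvd x₀).hasFDerivAt
    have h3 := (h0.comp_hasDerivAt 0 (hLd 0)).deriv
    exact h3
  rw [heq2] at h2
  exact h2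

lemma grad_norm_sq (f : E2 → ℝ) (x : E2) :
    ‖gradient f x‖ ^ 2 = ∑ i : Fin 2, (fderiv ℝ f x (EuclideanSpace.single i 1)) ^ 2 := by
  have hcoord : ∀ i : Fin 2, gradient f x i = fderiv ℝ f x (EuclideanSpace.single i 1) := by
    intro i
    have h : (inner ℝ (gradient f x) (EuclideanSpace.single i (1:ℝ)) : ℝ)
        = fderiv ℝ f x (EuclideanSpace.single i 1) := by
      unfold gradient
      exact InnerProductSpace.toDual_symm_apply
    rw [EuclideanSpace.inner_single_right] at h
    simpa using h
  rw [EuclideanSpace.norm_eq, Real.sq_sqrt (by positivity)]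
  refine Finset.sum_congr rfl fun i _ => ?_
  rw [← hcoord i]
  simp [sq_abs]

end WMPaux

open WMPaux

set_option maxHeartbeats 1000000 in
/-- Weighted maximum-principle estimate for the Galerkin system: if
`−Δψᵏ + (m² + λ_k)ψᵏ + F_k = 0` and the weighted squared norm `Ψ² = ρ·Σ(ψᵏ)²` attains a
global maximum at `x₀`, then
`m² ρ(x₀) Σ(ψᵏ(x₀))² ≤ −ρ(x₀) Σψᵏ(x₀)F_k(x₀) − (ρΔρ − 2‖∇ρ‖²)/(2ρ)·Σ(ψᵏ(x₀))²`. -/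
theorem weighted_maximum_principle
    (n : ℕ) (hn : 1 ≤ n) (m : ℝ) (hm : 0 < m)
    (lam : Fin n → ℝ) (hlam : ∀ k, 0 ≤ lam k)
    (ψ : Fin n → EuclideanSpace ℝ (Fin 2) → ℝ) (hψ : ∀ k, ContDiff ℝ 2 (ψ k))
    (F : Fin n → EuclideanSpace ℝ (Fin 2) → ℝ)
    (heq : ∀ k x, -laplacian2 (ψ k) x + (m ^ 2 + lam k) * ψ k x + F k x = 0)
    (ρ : EuclideanSpace ℝ (Fin 2) → ℝ) (hρ : ContDiff ℝ 2 ρ) (hρpos : ∀ x, 0 < ρ x)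
    (x₀ : EuclideanSpace ℝ (Fin 2))
    (hmax : ∀ x, ρ x * ∑ k, ψ k x ^ 2 ≤ ρ x₀ * ∑ k, ψ k x₀ ^ 2) :
    m ^ 2 * ρ x₀ * ∑ k, ψ k x₀ ^ 2 ≤
      -(ρ x₀ * ∑ k, ψ k x₀ * F k x₀) -
        (ρ x₀ * laplacian2 ρ x₀ - 2 * ‖gradient ρ x₀‖ ^ 2) / (2 * ρ x₀) *
          ∑ k, ψ k x₀ ^ 2 := by
  classical
  have hψd : ∀ k, Differentiable ℝ (ψ k) := fun k => (hψ k).differentiable two_ne_zero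
  have hρd : Differentiable ℝ ρ := hρ.differentiable two_ne_zero
  -- the sum of squares
  set S : E2 → ℝ := fun y => ∑ k, ψ k y * ψ k y with hSdef
  have hSsum : ∀ y, (∑ k, ψ k y ^ 2) = S y := by
    intro y; simp [hSdef, sq]
  rw [hSsum x₀]
  have hS2 : ContDiff ℝ 2 S := by
    rw [hSdef]; exact ContDiff.sum fun k _ => (hψ k).mul (hψ k)
  have hSd : Differentiable ℝ S := hS2.differentiable two_ne_zero
  set Φ : E2 → ℝ := fun y => ρ y * S y with hΦdef
  have hΦ2 : ContDiff ℝ 2 Φ := by rw [hΦdef]; exact hρ.mul hS2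
  have hmax' : ∀ x, Φ x ≤ Φ x₀ := by
    intro x
    have h := hmax x
    rw [hSsum x, hSsum x₀] at h
    exact h
  -- notation
  set r : ℝ := ρ x₀ with hrdef
  have hr : 0 < r := hρpos x₀
  set S₀ : ℝ := S x₀ with hS₀def
  set A : ℝ := laplacian2 ρ x₀ with hAdef
  set G : ℝ := ‖gradient ρ x₀‖ ^ 2 with hGdef
  set P : ℝ := ∑ k, ψ k x₀ * F k x₀ with hPdef
  -- first order condition
  have hlocmax : IsLocalMax Φ x₀ := Filter.Eventually.of_forall hmax'
  have hgrad : fderiv ℝ Φ x₀ = 0 := hlocmax.fderiv_eq_zero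
  have hfirst : ∀ i : Fin 2, r * Dv S (bvec i) x₀ = -(S₀ * Dv ρ (bvec i) x₀) := by
    intro i
    have h0 : Dv Φ (bvec i) x₀ = 0 := by
      unfold Dv; rw [hgrad]; rfl
    rw [hΦdef] at h0
    have h1 := Dv_mul hρd hSd (bvec i) x₀
    rw [h1] at h0
    rw [hrdef, hS₀def]
    linarith
  -- second order condition
  have hsec : ∀ i : Fin 2, Dv (Dv Φ (bvec i)) (bvec i) x₀ ≤ 0 := fun i =>
    dd_nonpos_at_max hΦ2 x₀ (bvec i) hmax'
  set D : ℝ := ∑ i : Fin 2, Dv ρ (bvec i) x₀ * Dv S (bvec i) x₀ with hDdef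
  set T : ℝ := laplacian2 S x₀ with hTdef
  -- expansion of the laplacian of Φ
  have hexp : laplacian2 Φ x₀ = A * S₀ + 2 * D + r * T := by
    rw [hΦdef, laplacian2_eq]
    rw [Finset.sum_congr rfl fun i (_ : i ∈ Finset.univ) => Dv_DD_mul hρ hS2 (bvec i) x₀]
    rw [Finset.sum_add_distrib, Finset.sum_add_distrib, ← Finset.sum_mul,
      ← Finset.mul_sum, ← Finset.mul_sum]
    rw [hAdef, hS₀def, hDdef, hTdef, hrdef, laplacian2_eq ρ x₀, laplacian2_eq S x₀]
  -- the laplacian of Φ is nonpositive at the max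
  have hΦlap : A * S₀ + 2 * D + r * T ≤ 0 := by
    rw [← hexp, laplacian2_eq]
    exact Finset.sum_nonpos fun i _ => hsec i
  -- r * D = -(S₀ * G)
  have hGsum : G = ∑ i : Fin 2, (Dv ρ (bvec i) x₀) ^ 2 := by
    rw [hGdef, grad_norm_sq ρ x₀]; rfl
  have hrD : r * D = -(S₀ * G) := by
    have hterm : ∀ i : Fin 2, r * (Dv ρ (bvec i) x₀ * Dv S (bvec i) x₀)
        = -(S₀ * (Dv ρ (bvec i) x₀) ^ 2) := fun i => by
      linear_combination (Dv ρ (bvec i) x₀) * hfirst i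
    calc r * D = ∑ i : Fin 2, r * (Dv ρ (bvec i) x₀ * Dv S (bvec i) x₀) := by
          rw [hDdef, Finset.mul_sum]
      _ = ∑ i : Fin 2, -(S₀ * (Dv ρ (bvec i) x₀) ^ 2) :=
          Finset.sum_congr rfl fun i _ => hterm i
      _ = -(S₀ * G) := by rw [hGsum, Finset.mul_sum]; simp
  -- decomposition of T over k, and lower bound
  have hSdd : ∀ (v x : E2),
      Dv (Dv S v) v x = ∑ k, Dv (Dv (fun y => ψ k y * ψ k y) v) v x := by
    intro v x
    rw [hSdef]
    exact Dv_DD_sum Finset.univ _ (fun k => (hψ k).mul (hψ k)) v x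
  have hTlow : 2 * (m ^ 2 * S₀) + 2 * P ≤ T := by
    have hTeq : T = ∑ k, (2 * (ψ k x₀ * laplacian2 (ψ k) x₀)
        + 2 * ∑ i : Fin 2, Dv (ψ k) (bvec i) x₀ ^ 2) := by
      rw [hTdef, laplacian2_eq]
      rw [Finset.sum_congr rfl fun i (_ : i ∈ Finset.univ) => hSdd (bvec i) x₀]
      rw [Finset.sum_comm]
      refine Finset.sum_congr rfl fun k _ => ?_
      rw [laplacian2_eq]
      exact sum_DD_sq (ψ k) (hψ k) x₀
    rw [hTeq]
    have hstep : ∀ k : Fin n,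
        2 * (m ^ 2 * (ψ k x₀ * ψ k x₀)) + 2 * (ψ k x₀ * F k x₀)
          ≤ 2 * (ψ k x₀ * laplacian2 (ψ k) x₀)
            + 2 * ∑ i : Fin 2, Dv (ψ k) (bvec i) x₀ ^ 2 := by
      intro k
      have hlapk : laplacian2 (ψ k) x₀ = (m ^ 2 + lam k) * ψ k x₀ + F k x₀ := by
        linarith [heq k x₀]
      have hQ : (0:ℝ) ≤ ∑ i : Fin 2, Dv (ψ k) (bvec i) x₀ ^ 2 :=
        Finset.sum_nonneg fun i _ => sq_nonneg _
      have hl : 0 ≤ lam k * (ψ k x₀ * ψ k x₀) := mul_nonneg (hlam k) (mul_self_nonneg _)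
      rw [hlapk]
      nlinarith
    calc 2 * (m ^ 2 * S₀) + 2 * P
        = ∑ k, (2 * (m ^ 2 * (ψ k x₀ * ψ k x₀)) + 2 * (ψ k x₀ * F k x₀)) := by
          rw [hS₀def, hPdef, hSdef]
          simp only [Finset.mul_sum, ← Finset.sum_add_distrib]
      _ ≤ _ := Finset.sum_le_sum fun k _ => hstep k
  -- key multiplied inequality
  have hkey : r * (A * S₀) - 2 * (S₀ * G) + r * r * (2 * (m ^ 2 * S₀) + 2 * P) ≤ 0 := by
    have h1 : r * (A * S₀ + 2 * D + r * T) ≤ r * 0 :=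
      mul_le_mul_of_nonneg_left hΦlap hr.le
    rw [mul_zero] at h1
    have h2 : r * r * (2 * (m ^ 2 * S₀) + 2 * P) ≤ r * r * T :=
      mul_le_mul_of_nonneg_left hTlow (mul_self_nonneg r)
    nlinarith [h1, h2, hrD]
  -- conclude
  have h2r : (0:ℝ) < 2 * r := by linarith
  set q : ℝ := (r * A - 2 * G) / (2 * r) with hqdef
  have hq : q * (2 * r) = r * A - 2 * G := div_mul_cancel₀ _ (ne_of_gt h2r)
  have hqS : q * (2 * r) * S₀ = (r * A - 2 * G) * S₀ := by rw [hq]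
  nlinarith [hkey, hqS, h2r]
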